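/- For every integer k, the row vector R_8·γ^k equals the vector whose coordinates are (4k²+4k+1-(-1)^k, 2k²+k+½-½(-1)^k, 4k²+4k+2-(-1)^k, 7k²+7k+2-2(-1)^k, 6k²+6k+3/2-(3/2)(-1)^k, 5k²+5k+1-(-1)^k, 4k²+4k+½-½(-1)^k, 3(k²+k), 2(k²+k), k²+k). -/

import Mathlib

open Matrix

def eps : Matrix (Fin 10) (Fin 10) ℤ :=
  !![-3,-2,-4,-6,-5,-4,-3,-2, 0, 0;
      0,-1, 0, 0, 0, 0, 0, 0, 0, 0;
      2, 2, 3, 4, 3, 2, 1, 0, 0, 0;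
      0, 0, 0, 0, 0, 0, 0, 1, 0, 0;
      0, 0, 0, 0, 0, 0, 1, 0, 0, 0;
      0, 0, 0, 0, 0, 1, 0, 0, 0, 0;
      0, 0, 0, 0, 1, 0, 0, 0, 0, 0;
      0, 0, 0, 1, 0, 0, 0, 0, 0, 0;
      4, 2, 4, 6, 5, 4, 3, 2, 1, 0;
      0, 0, 0, 0, 0, 0, 0, 0, 0, 1]

def gam : Matrix (Fin 10) (Fin 10) ℤ :=
  !![-9,-4,-10,-16,-13,-10,-7,-6,-4,-2;
     -8,-3, -8,-14,-12,-10,-8,-6,-4,-2;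
     10, 4, 11, 18, 15, 12, 9, 6, 4, 2;
      0, 0,  0,  0,  0,  0, 0, 1, 0, 0;
      0, 0,  0,  0,  0,  0, 0, 0, 1, 0;
      0, 0,  0,  0,  0,  0, 0, 0, 0, 1;
      4, 2,  4,  6,  5,  4, 3, 2, 1, 0;
      0, 0,  0,  1,  0,  0, 0, 0, 0, 0;
      0, 0,  0,  0,  1,  0, 0, 0, 0, 0;
      0, 0,  0,  0,  0,  1, 0, 0, 0, 0]

/-- `γ` as a matrix over `ℚ`. -/
def gamQ : Matrix (Fin 10) (Fin 10) ℚ := gam.map ((↑) : ℤ → ℚ)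

/-- The row vector `R₈`. -/
def R8Q : Fin 10 → ℚ := ![0, 0, 1, 0, 0, 0, 0, 0, 0, 0]

def gamInv : Matrix (Fin 10) (Fin 10) ℤ :=
  !![-9,-6,-10,-16,-13,-10,-7,-6,-4,-2;
      8, 5,  8, 14, 12, 10, 8, 6, 4, 2;
      2, 2,  3,  4,  3,  2, 1, 0, 0, 0;
      0, 0,  0,  0,  0,  0, 0, 1, 0, 0;
      0, 0,  0,  0,  0,  0, 0, 0, 1, 0;
      0, 0,  0,  0,  0,  0, 0, 0, 0, 1;
      4, 2,  4,  6,  5,  4, 3, 2, 1, 0;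
      0, 0,  0,  1,  0,  0, 0, 0, 0, 0;
      0, 0,  0,  0,  1,  0, 0, 0, 0, 0;
      0, 0,  0,  0,  0,  1, 0, 0, 0, 0]

def gamInvQ : Matrix (Fin 10) (Fin 10) ℚ := gamInv.map ((↑) : ℤ → ℚ)

lemma gam_mul_inv : gam * gamInv = 1 := by decide

lemma gamQ_mul_inv : gamQ * gamInvQ = 1 := by
  have h : (gam * gamInv).map (Int.castRingHom ℚ) =
      (1 : Matrix (Fin 10) (Fin 10) ℤ).map (Int.castRingHom ℚ) := by rw [gam_mul_inv]
  rw [Matrix.map_mul, Matrix.map_one _ (map_zero _) (map_one _)] at h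
  exact h

lemma gamQ_det_isUnit : IsUnit gamQ.det :=
  Matrix.isUnit_det_of_right_inverse gamQ_mul_inv

lemma gamQ_inv : gamQ⁻¹ = gamInvQ := Matrix.inv_eq_right_inv gamQ_mul_inv

def vv (k : ℤ) : Fin 10 → ℚ :=
  ![4*(k:ℚ)^2 + 4*k + 1 - (-1)^k,
    2*(k:ℚ)^2 + k + 1/2 - (1/2)*(-1)^k,
    4*(k:ℚ)^2 + 4*k + 2 - (-1)^k,
    7*(k:ℚ)^2 + 7*k + 2 - 2*(-1)^k,
    6*(k:ℚ)^2 + 6*k + 3/2 - (3/2)*(-1)^k,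
    5*(k:ℚ)^2 + 5*k + 1 - (-1)^k,
    4*(k:ℚ)^2 + 4*k + 1/2 - (1/2)*(-1)^k,
    3*((k:ℚ)^2 + k),
    2*((k:ℚ)^2 + k),
    (k:ℚ)^2 + k]

lemma neg_one_zpow_add_one (k : ℤ) : ((-1 : ℚ))^(k+1) = -(-1:ℚ)^k := by
  rw [zpow_add_one₀ (by norm_num : (-1:ℚ) ≠ 0)]; ring

lemma neg_one_zpow_sub_one (k : ℤ) : ((-1 : ℚ))^(k-1) = -(-1:ℚ)^k := by
  rw [zpow_sub_one₀ (by norm_num : (-1:ℚ) ≠ 0)]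
  norm_num

@[simp] lemma vec10_app_0 {α : Type*} (a0 a1 a2 a3 a4 a5 a6 a7 a8 a9 : α) :
    ![a0,a1,a2,a3,a4,a5,a6,a7,a8,a9] (0 : Fin 10) = a0 := rfl
@[simp] lemma vec10_app_1 {α : Type*} (a0 a1 a2 a3 a4 a5 a6 a7 a8 a9 : α) :
    ![a0,a1,a2,a3,a4,a5,a6,a7,a8,a9] (1 : Fin 10) = a1 := rfl
@[simp] lemma vec10_app_2 {α : Type*} (a0 a1 a2 a3 a4 a5 a6 a7 a8 a9 : α) :
    ![a0,a1,a2,a3,a4,a5,a6,a7,a8,a9] (2 : Fin 10) = a2 := rfl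
@[simp] lemma vec10_app_3 {α : Type*} (a0 a1 a2 a3 a4 a5 a6 a7 a8 a9 : α) :
    ![a0,a1,a2,a3,a4,a5,a6,a7,a8,a9] (3 : Fin 10) = a3 := rfl
@[simp] lemma vec10_app_4 {α : Type*} (a0 a1 a2 a3 a4 a5 a6 a7 a8 a9 : α) :
    ![a0,a1,a2,a3,a4,a5,a6,a7,a8,a9] (4 : Fin 10) = a4 := rfl
@[simp] lemma vec10_app_5 {α : Type*} (a0 a1 a2 a3 a4 a5 a6 a7 a8 a9 : α) :
    ![a0,a1,a2,a3,a4,a5,a6,a7,a8,a9] (5 : Fin 10) = a5 := rfl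
@[simp] lemma vec10_app_6 {α : Type*} (a0 a1 a2 a3 a4 a5 a6 a7 a8 a9 : α) :
    ![a0,a1,a2,a3,a4,a5,a6,a7,a8,a9] (6 : Fin 10) = a6 := rfl
@[simp] lemma vec10_app_7 {α : Type*} (a0 a1 a2 a3 a4 a5 a6 a7 a8 a9 : α) :
    ![a0,a1,a2,a3,a4,a5,a6,a7,a8,a9] (7 : Fin 10) = a7 := rfl
@[simp] lemma vec10_app_8 {α : Type*} (a0 a1 a2 a3 a4 a5 a6 a7 a8 a9 : α) :
    ![a0,a1,a2,a3,a4,a5,a6,a7,a8,a9] (8 : Fin 10) = a8 := rfl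
@[simp] lemma vec10_app_9 {α : Type*} (a0 a1 a2 a3 a4 a5 a6 a7 a8 a9 : α) :
    ![a0,a1,a2,a3,a4,a5,a6,a7,a8,a9] (9 : Fin 10) = a9 := rfl

set_option maxHeartbeats 2000000 in
lemma step_up (k : ℤ) : vv k ᵥ* gamQ = vv (k+1) := by
  funext j
  fin_cases j <;>
  · simp [vv, gamQ, gam, Matrix.vecMul, dotProduct, Fin.sum_univ_succ, neg_one_zpow_add_one]
    push_cast
    ring

set_option maxHeartbeats 2000000 in
lemma step_down (k : ℤ) : vv k ᵥ* gamInvQ = vv (k-1) := by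
  funext j
  fin_cases j <;>
  · simp [vv, gamInvQ, gamInv, Matrix.vecMul, dotProduct, Fin.sum_univ_succ,
      neg_one_zpow_sub_one]
    push_cast
    ring

/-- The coordinates of `R₈ · γᵏ` for every integer `k`. -/
theorem R8_gamma_pow_coords (k : ℤ) :
    R8Q ᵥ* (gamQ ^ k) =
      ![4*(k:ℚ)^2 + 4*k + 1 - (-1)^k,
        2*(k:ℚ)^2 + k + 1/2 - (1/2)*(-1)^k,
        4*(k:ℚ)^2 + 4*k + 2 - (-1)^k,
        7*(k:ℚ)^2 + 7*k + 2 - 2*(-1)^k,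
        6*(k:ℚ)^2 + 6*k + 3/2 - (3/2)*(-1)^k,
        5*(k:ℚ)^2 + 5*k + 1 - (-1)^k,
        4*(k:ℚ)^2 + 4*k + 1/2 - (1/2)*(-1)^k,
        3*((k:ℚ)^2 + k),
        2*((k:ℚ)^2 + k),
        (k:ℚ)^2 + k] := by
  show R8Q ᵥ* (gamQ ^ k) = vv k
  induction k using Int.induction_on with
  | zero =>
    rw [zpow_zero, vecMul_one]
    funext j; fin_cases j <;> norm_num [R8Q, vv]
  | succ n ih =>
    rw [Matrix.zpow_add_one gamQ_det_isUnit, ← vecMul_vecMul, ih, step_up]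
  | pred n ih =>
    have h : (-(n:ℤ) - 1) = (-(n:ℤ)) - 1 := rfl
    rw [h, Matrix.zpow_sub_one gamQ_det_isUnit, ← vecMul_vecMul, ih,
      gamQ_inv, step_down]
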